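/- arXiv:1403.5891 — 6 statements merged into one kernel-verified Lean document; each statement's English description precedes it below -/
import Mathlib

section
/- Let v, w be representable positive functionals on a complex *-algebra A such that w is absolutely continuous with respect to v. Then there exists a sequence (a_n) in A such that w(a) = lim_{n→∞} v(a_n* a) for all a ∈ A; moreover the convergence is uniform on the set {a ∈ A : w(a*a) + v(a*a) ≤ 1}, i.e. sup{|w(a) − v(a_n* a)| : a ∈ A, w(a*a) + v(a*a) ≤ 1} → 0 as n → ∞. -/
open Filter Topology
open scoped ComplexInnerProductSpace ComplexOrder

/-- `w` is absolutely continuous with respect to `v`. -/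
def FunctionalAC {A : Type*} [NonUnitalRing A] [StarRing A] (w v : A → ℂ) : Prop :=
  ∀ a : ℕ → A,
    Tendsto (fun n => v (star (a n) * a n)) atTop (𝓝 0) →
    Tendsto (fun p : ℕ × ℕ => w (star (a p.1 - a p.2) * (a p.1 - a p.2))) atTop (𝓝 0) →
    Tendsto (fun n => w (star (a n) * a n)) atTop (𝓝 0)

set_option maxHeartbeats 1000000 in
set_option synthInstance.maxHeartbeats 400000 in
/-- **Theorem.** Let `v, w` be representable positive functionals on a (not necessarily
unital) complex `*`-algebra `A` with `w` absolutely continuous with respect to `v`.  Then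
there is a sequence `(a n)` in `A` such that `w b = lim_n v (star (a n) * b)` for all
`b ∈ A`, uniformly on `{b : w (star b * b) + v (star b * b) ≤ 1}`.
(Here we witness representability by given cyclic representations `(Hv, πv, ζv)` of `v`
and `(Hw, πw, ζw)` of `w`; the paper-style inner product `⟨·,·⟩`, linear in the first
variable, corresponds to `⟪·,·⟫` with swapped arguments in Mathlib's convention.) -/
theorem radon_nikodym_representable_pointwise
    {A : Type*} [NonUnitalRing A] [Module ℂ A] [SMulCommClass ℂ A A]
    [IsScalarTower ℂ A A] [StarRing A] [StarModule ℂ A]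
    (v w : A →ₗ[ℂ] ℂ)
    (hv : ∀ a : A, 0 ≤ v (star a * a)) (hw : ∀ a : A, 0 ≤ w (star a * a))
    {Hv : Type*} [NormedAddCommGroup Hv] [InnerProductSpace ℂ Hv] [CompleteSpace Hv]
    (πv : A →⋆ₙₐ[ℂ] (Hv →L[ℂ] Hv)) (ζv : Hv)
    (hv_cyc : DenseRange fun a : A => πv a ζv)
    (hv_rep : ∀ a : A, v a = ⟪ζv, πv a ζv⟫)
    {Hw : Type*} [NormedAddCommGroup Hw] [InnerProductSpace ℂ Hw] [CompleteSpace Hw]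
    (πw : A →⋆ₙₐ[ℂ] (Hw →L[ℂ] Hw)) (ζw : Hw)
    (hw_cyc : DenseRange fun a : A => πw a ζw)
    (hw_rep : ∀ a : A, w a = ⟪ζw, πw a ζw⟫)
    (hac : FunctionalAC w v) :
    ∃ a : ℕ → A,
      (∀ b : A, Tendsto (fun n => v (star (a n) * b)) atTop (𝓝 (w b))) ∧
      (∀ ε : ℝ, 0 < ε → ∃ N : ℕ, ∀ n ≥ N, ∀ b : A,
        (w (star b * b)).re + (v (star b * b)).re ≤ 1 →
        ‖w b - v (star (a n) * b)‖ ≤ ε) := by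
  classical
  let Lv : A →ₗ[ℂ] Hv :=
    { toFun := fun a => πv a ζv
      map_add' := fun a b => by simp
      map_smul' := fun c a => by simp }
  let Lw : A →ₗ[ℂ] Hw :=
    { toFun := fun a => πw a ζw
      map_add' := fun a b => by simp
      map_smul' := fun c a => by simp }
  let L : A →ₗ[ℂ] WithLp 2 (Hv × Hw) :=
    (WithLp.linearEquiv 2 ℂ (Hv × Hw)).symm.toLinearMap.comp (Lv.prod Lw)
  let K : Submodule ℂ (WithLp 2 (Hv × Hw)) := (LinearMap.range L).topologicalClosure
  haveI : CompleteSpace K := (LinearMap.range L).isClosed_topologicalClosure.completeSpace_coe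
  let Ie : WithLp 2 (Hv × Hw) →L[ℂ] Hv :=
    (ContinuousLinearMap.fst ℂ Hv Hw).comp
      (WithLp.prodContinuousLinearEquiv 2 ℂ Hv Hw).toContinuousLinearMap
  let Je : WithLp 2 (Hv × Hw) →L[ℂ] Hw :=
    (ContinuousLinearMap.snd ℂ Hv Hw).comp
      (WithLp.prodContinuousLinearEquiv 2 ℂ Hv Hw).toContinuousLinearMap
  let I : K →L[ℂ] Hv := Ie.comp K.subtypeL
  let J : K →L[ℂ] Hw := Je.comp K.subtypeL
  -- elements k_a
  have hmem : ∀ a : A, L a ∈ K := fun a =>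
    Submodule.le_topologicalClosure _ (LinearMap.mem_range_self L a)
  let ka : A → K := fun a => ⟨L a, hmem a⟩
  have hIka : ∀ a : A, I (ka a) = πv a ζv := fun a => rfl
  have hJka : ∀ a : A, J (ka a) = πw a ζw := fun a => rfl
  -- inner products
  have hinner : ∀ k k' : K, (⟪k, k'⟫ : ℂ) = ⟪I k, I k'⟫ + ⟪J k, J k'⟫ := by
    intro k k'
    rw [Submodule.coe_inner]
    exact WithLp.prod_inner_apply _ _
  let P : K →L[ℂ] K := (ContinuousLinearMap.adjoint I).comp I
  let z : K := ContinuousLinearMap.adjoint J ζw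
  -- Fact 1 : w b = ⟪z, ka b⟫
  have fact1 : ∀ b : A, w b = ⟪z, ka b⟫ := by
    intro b
    rw [ContinuousLinearMap.adjoint_inner_left, hJka, hw_rep]
  -- Fact 2 : v (star a * b) = ⟪P (ka a), ka b⟫
  have fact2 : ∀ a b : A, v (star a * b) = ⟪P (ka a), ka b⟫ := by
    intro a b
    have : (⟪P (ka a), ka b⟫ : ℂ) = ⟪I (ka a), I (ka b)⟫ := by
      simp only [P, ContinuousLinearMap.comp_apply,
        ContinuousLinearMap.adjoint_inner_left]
    rw [this, hIka, hIka, hv_rep, map_mul, ContinuousLinearMap.mul_apply,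
      map_star, ContinuousLinearMap.star_eq_adjoint,
      ContinuousLinearMap.adjoint_inner_right]
  -- Fact 3 : norms
  have fact3v : ∀ b : A, (v (star b * b)).re = ‖πv b ζv‖ ^ 2 := by
    intro b
    have : v (star b * b) = ⟪πv b ζv, πv b ζv⟫ := by
      rw [hv_rep, map_mul, ContinuousLinearMap.mul_apply, map_star,
        ContinuousLinearMap.star_eq_adjoint, ContinuousLinearMap.adjoint_inner_right]
    rw [this, inner_self_eq_norm_sq_to_K]
    norm_cast
  have fact3w : ∀ b : A, (w (star b * b)).re = ‖πw b ζw‖ ^ 2 := by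
    intro b
    have : w (star b * b) = ⟪πw b ζw, πw b ζw⟫ := by
      rw [hw_rep, map_mul, ContinuousLinearMap.mul_apply, map_star,
        ContinuousLinearMap.star_eq_adjoint, ContinuousLinearMap.adjoint_inner_right]
    rw [this, inner_self_eq_norm_sq_to_K]
    norm_cast
  have fact3 : ∀ b : A, ‖ka b‖ ^ 2 = (v (star b * b)).re + (w (star b * b)).re := by
    intro b
    have h1 : ‖ka b‖ = ‖L b‖ := rfl
    rw [h1, WithLp.prod_norm_sq_eq_of_L2, fact3v, fact3w]
    rfl
  -- positivity: the values are real
  have hreal_v : ∀ b : A, v (star b * b) = (((v (star b * b)).re : ℝ) : ℂ) := by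
    intro b
    have h := hv b
    rw [Complex.le_def] at h
    exact Complex.ext (by simp) (by simp [← h.2])
  have hreal_w : ∀ b : A, w (star b * b) = (((w (star b * b)).re : ℝ) : ℂ) := by
    intro b
    have h := hw b
    rw [Complex.le_def] at h
    exact Complex.ext (by simp) (by simp [← h.2])
  -- Fact 4 : injectivity of I on K (from absolute continuity)
  have fact4 : ∀ k : K, I k = 0 → k = 0 := by
    intro k hk
    have hk' : (k : WithLp 2 (Hv × Hw)) ∈
        closure ((LinearMap.range L : Submodule ℂ _) : Set _) := k.2
    obtain ⟨x, hxmem, hxlim⟩ := mem_closure_iff_seq_limit.mp hk'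
    choose a ha using hxmem
    have hxv : Tendsto (fun n => πv (a n) ζv) atTop (𝓝 (I k)) := by
      have h := (Ie.continuous.tendsto _).comp hxlim
      have he : ∀ n, Ie (x n) = πv (a n) ζv := fun n => by rw [← ha n]; rfl
      change Tendsto _ atTop (𝓝 (Ie k))
      simpa [Function.comp_def, he] using h
    have hxw : Tendsto (fun n => πw (a n) ζw) atTop (𝓝 (J k)) := by
      have h := (Je.continuous.tendsto _).comp hxlim
      have he : ∀ n, Je (x n) = πw (a n) ζw := fun n => by rw [← ha n]; rfl
      change Tendsto _ atTop (𝓝 (Je k))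
      simpa [Function.comp_def, he] using h
    rw [hk] at hxv
    have h1 : Tendsto (fun n => v (star (a n) * a n)) atTop (𝓝 0) := by
      have heq : ∀ n, v (star (a n) * a n) = ((‖πv (a n) ζv‖ ^ 2 : ℝ) : ℂ) := fun n => by
        rw [hreal_v, fact3v]
      have hn : Tendsto (fun n => ‖πv (a n) ζv‖ ^ 2) atTop (𝓝 0) := by
        simpa using (hxv.norm.pow 2)
      have := (Complex.continuous_ofReal.tendsto _).comp hn
      simpa [Function.comp_def, heq] using this
    have h2 : Tendsto (fun p : ℕ × ℕ =>
        w (star (a p.1 - a p.2) * (a p.1 - a p.2))) atTop (𝓝 0) := by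
      have heq : ∀ p : ℕ × ℕ, w (star (a p.1 - a p.2) * (a p.1 - a p.2)) =
          ((‖πw (a p.1) ζw - πw (a p.2) ζw‖ ^ 2 : ℝ) : ℂ) := fun p => by
        rw [hreal_w, fact3w]
        simp [map_sub]
      have hc : Tendsto (fun p : ℕ × ℕ => πw (a p.1) ζw - πw (a p.2) ζw) atTop (𝓝 0) := by
        rw [← Filter.prod_atTop_atTop_eq]
        simpa using ((hxw.comp tendsto_fst).sub (hxw.comp tendsto_snd))
      have hn : Tendsto (fun p : ℕ × ℕ =>
          ‖πw (a p.1) ζw - πw (a p.2) ζw‖ ^ 2) atTop (𝓝 0) := by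
        simpa using (hc.norm.pow 2)
      have := (Complex.continuous_ofReal.tendsto _).comp hn
      have h4 : Tendsto (fun p : ℕ × ℕ =>
          ((‖πw (a p.1) ζw - πw (a p.2) ζw‖ ^ 2 : ℝ) : ℂ)) atTop (𝓝 0) := by
        simpa [Function.comp_def] using this
      exact h4.congr (fun p => (heq p).symm)
    have h3 := hac a h1 h2
    -- conclude ‖πw (a n) ζw‖ → 0
    have hre : Tendsto (fun n => ‖πw (a n) ζw‖ ^ 2) atTop (𝓝 0) := by
      have := (Complex.continuous_re.tendsto _).comp h3
      have heq : ∀ n, (w (star (a n) * a n)).re = ‖πw (a n) ζw‖ ^ 2 := fun n => fact3w (a n)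
      simpa [Function.comp_def, heq] using this
    have hnorm : Tendsto (fun n => ‖πw (a n) ζw‖) atTop (𝓝 0) := by
      have := (Real.continuous_sqrt.tendsto _).comp hre
      simpa [Function.comp_def, Real.sqrt_sq (norm_nonneg _)] using this
    have hy0 : Tendsto (fun n => πw (a n) ζw) atTop (𝓝 0) :=
      tendsto_zero_iff_norm_tendsto_zero.mpr hnorm
    have hJ0 : J k = 0 := tendsto_nhds_unique hxw hy0
    have hzero : (⟪k, k⟫ : ℂ) = 0 := by rw [hinner k k, hk, hJ0]; simp
    exact inner_self_eq_zero.mp hzero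
  -- density of the range of `ka` in `K`
  have hdense : DenseRange ka := by
    intro k
    obtain ⟨x, hxmem, hxlim⟩ := mem_closure_iff_seq_limit.mp k.2
    choose a ha using hxmem
    have htt : Tendsto (fun n => ka (a n)) atTop (𝓝 k) := by
      rw [Topology.IsEmbedding.subtypeVal.tendsto_nhds_iff]
      exact hxlim.congr (fun n => (ha n).symm)
    exact mem_closure_of_tendsto htt (Filter.Eventually.of_forall fun n => Set.mem_range_self _)
  -- the range of P has trivial orthogonal complement
  have horth : (LinearMap.range P.toLinearMap)ᗮ = ⊥ := by
    rw [Submodule.eq_bot_iff]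
    intro u hu
    have h0 : (⟪P u, u⟫ : ℂ) = 0 :=
      (Submodule.mem_orthogonal _ u).mp hu (P u) (LinearMap.mem_range_self _ u)
    have h1 : (⟪I u, I u⟫ : ℂ) = 0 := by
      rw [← h0]
      simp only [P, ContinuousLinearMap.comp_apply, ContinuousLinearMap.adjoint_inner_left]
    exact fact4 u (inner_self_eq_zero.mp h1)
  have htop : (LinearMap.range P.toLinearMap).topologicalClosure = ⊤ :=
    Submodule.topologicalClosure_eq_top_iff.mpr horth
  -- z is approximated by elements P (ka a)
  have fact5 : ∀ ε : ℝ, 0 < ε → ∃ a : A, ‖z - P (ka a)‖ < ε := by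
    intro ε hε
    have hz : z ∈ closure (⇑P '' Set.range ka) := by
      have h2 : z ∈ ((LinearMap.range P.toLinearMap).topologicalClosure : Set ↥K) := by
        rw [htop]; trivial
      rw [Submodule.topologicalClosure_coe] at h2
      have h1 : z ∈ closure (Set.range ⇑P) := by
        convert h2 using 2
        exact (LinearMap.coe_range _).symm
      have h3 : Set.range ⇑P ⊆ closure (⇑P '' Set.range ka) := by
        rintro - ⟨u, rfl⟩
        exact (image_closure_subset_closure_image P.continuous)
          (Set.mem_image_of_mem ⇑P (hdense u))
      exact closure_minimal h3 isClosed_closure h1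
    rw [Metric.mem_closure_iff] at hz
    obtain ⟨y, hy, hdist⟩ := hz ε hε
    obtain ⟨-, ⟨a, rfl⟩, rfl⟩ := hy
    exact ⟨a, by simpa [dist_eq_norm] using hdist⟩
  have fact5' : ∀ n : ℕ, ∃ a : A, ‖z - P (ka a)‖ < 1 / ((n : ℝ) + 1) := fun n =>
    fact5 _ (by positivity)
  choose a haseq using fact5'
  -- key estimate
  have key : ∀ (n : ℕ) (b : A),
      ‖w b - v (star (a n) * b)‖ ≤ ‖z - P (ka (a n))‖ * ‖ka b‖ := by
    intro n b
    rw [fact1 b, fact2 (a n) b]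
    have h := norm_inner_le_norm (𝕜 := ℂ) (z - P (ka (a n))) (ka b)
    rwa [inner_sub_left] at h
  have hδ : Tendsto (fun n => ‖z - P (ka (a n))‖) atTop (𝓝 0) := by
    apply squeeze_zero (fun n => norm_nonneg _) (fun n => (haseq n).le)
    exact tendsto_one_div_add_atTop_nhds_zero_nat
  refine ⟨a, ?_, ?_⟩
  · intro b
    rw [tendsto_iff_norm_sub_tendsto_zero]
    apply squeeze_zero (fun n => norm_nonneg _)
      (fun n => (norm_sub_rev _ _).le.trans (key n b))
    simpa using hδ.mul_const ‖ka b‖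
  · intro ε hε
    obtain ⟨N, hN⟩ := Metric.tendsto_atTop.mp hδ ε hε
    refine ⟨N, fun n hn b hb => ?_⟩
    have h2 : ‖ka b‖ ≤ 1 := by
      have hsq : ‖ka b‖ ^ 2 ≤ 1 := by rw [fact3 b]; linarith
      nlinarith [norm_nonneg (ka b)]
    have hd : ‖z - P (ka (a n))‖ < ε := by
      simpa [Real.dist_eq, abs_of_nonneg (norm_nonneg _)] using hN n hn
    calc ‖w b - v (star (a n) * b)‖ ≤ ‖z - P (ka (a n))‖ * ‖ka b‖ := key n b
      _ ≤ ε := by nlinarith [norm_nonneg (z - P (ka (a n)))]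
end

section
/- Let A be a Banach *-algebra (a complete normed complex *-algebra with submultiplicative norm and isometric involution) and let v, w be representable positive functionals on A such that w is absolutely continuous with respect to v. Then there exists a sequence (a_n) in A such that the functionals w_n(a) := v(a_n* a) satisfy ‖w − w_n‖ → 0, i.e. sup{|w(a) − v(a_n* a)| : a ∈ A, ‖a‖ ≤ 1} → 0 as n → ∞. -/
open Filter Topology
open scoped ComplexInnerProductSpace ComplexOrder

section Contractive
variable {A : Type*} [NonUnitalNormedRing A] [CompleteSpace A] [StarRing A]
    [NormedStarGroup A] [NormedSpace ℂ A] [SMulCommClass ℂ A A]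
    [IsScalarTower ℂ A A]

omit [StarRing A] [NormedStarGroup A] in
lemma my_quasispectrum_norm_le (x : A) {k : ℂ} (hk : k ∈ quasispectrum ℂ x) : ‖k‖ ≤ ‖x‖ := by
  rw [Unitization.quasispectrum_eq_spectrum_inr' ℂ ℂ x,
    ← AlgEquiv.spectrum_eq (WithLp.unitizationAlgEquiv ℂ).symm ((x : Unitization ℂ A))] at hk
  have h1 : ‖(1 : WithLp 1 (Unitization ℂ A))‖ = 1 := by
    have e : WithLp.ofLp (1 : WithLp 1 (Unitization ℂ A)) = 1 := rfl
    simp [WithLp.unitization_norm_def, e]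
  have := spectrum.norm_le_norm_mul_of_mem hk
  rw [h1, mul_one] at this
  have e2 : (WithLp.unitizationAlgEquiv ℂ).symm ((x : Unitization ℂ A))
      = WithLp.toLp 1 ((x : Unitization ℂ A)) := rfl
  rwa [e2, WithLp.unitization_norm_inr] at this

lemma my_starHom_norm_le {B : Type*} [CStarAlgebra B]
    (π : A →⋆ₙₐ[ℂ] B) (a : A) : ‖π a‖ ≤ ‖a‖ := by
  have hsa : ∀ x : A, IsSelfAdjoint x → ‖π x‖ ≤ ‖x‖ := by
    intro x hx
    have h1 : IsSelfAdjoint (π x) := hx.map π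
    have h3 : spectralRadius ℂ (π x) ≤ (‖x‖₊ : ENNReal) := by
      rw [spectralRadius]
      refine iSup₂_le fun k hk => ?_
      have hk' : k ∈ quasispectrum ℂ x :=
        NonUnitalAlgHom.quasispectrum_apply_subset π x (spectrum_subset_quasispectrum ℂ _ hk)
      exact_mod_cast my_quasispectrum_norm_le x hk'
    rw [h1.spectralRadius_eq_nnnorm] at h3
    exact_mod_cast h3
  have key := hsa (star a * a) (IsSelfAdjoint.star_mul_self a)
  have e1 : ‖π (star a * a)‖ = ‖π a‖ * ‖π a‖ := by
    rw [map_mul, map_star, CStarRing.norm_star_mul_self]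
  have e2 : ‖star a * a‖ ≤ ‖a‖ * ‖a‖ := by
    calc ‖star a * a‖ ≤ ‖star a‖ * ‖a‖ := norm_mul_le _ _
    _ = ‖a‖ * ‖a‖ := by rw [norm_star]
  nlinarith [norm_nonneg (π a), norm_nonneg a]

end Contractive


set_option maxHeartbeats 1000000 in
set_option synthInstance.maxHeartbeats 1000000 in
/-- **Corollary.** Let `A` be a Banach `*`-algebra and `v, w` representable positive
functionals on `A` such that `w` is absolutely continuous with respect to `v`.  Then there
is a sequence `(a n)` such that the functionals `w_n b := v (star (a n) * b)` converge to
`w` in norm: `sup {|w b - v (star (a n) * b)| : ‖b‖ ≤ 1} → 0`. -/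
theorem radon_nikodym_banach_star_algebra
    {A : Type*} [NonUnitalNormedRing A] [CompleteSpace A] [StarRing A]
    [NormedStarGroup A] [NormedSpace ℂ A] [SMulCommClass ℂ A A]
    [IsScalarTower ℂ A A] [StarModule ℂ A]
    (v w : A →ₗ[ℂ] ℂ)
    (hv : ∀ a : A, 0 ≤ v (star a * a)) (hw : ∀ a : A, 0 ≤ w (star a * a))
    {Hv : Type*} [NormedAddCommGroup Hv] [InnerProductSpace ℂ Hv] [CompleteSpace Hv]
    (πv : A →⋆ₙₐ[ℂ] (Hv →L[ℂ] Hv)) (ζv : Hv)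
    (hv_cyc : DenseRange fun a : A => πv a ζv)
    (hv_rep : ∀ a : A, v a = ⟪ζv, πv a ζv⟫)
    {Hw : Type*} [NormedAddCommGroup Hw] [InnerProductSpace ℂ Hw] [CompleteSpace Hw]
    (πw : A →⋆ₙₐ[ℂ] (Hw →L[ℂ] Hw)) (ζw : Hw)
    (hw_cyc : DenseRange fun a : A => πw a ζw)
    (hw_rep : ∀ a : A, w a = ⟪ζw, πw a ζw⟫)
    (hac : FunctionalAC w v) :
    ∃ a : ℕ → A, ∀ ε : ℝ, 0 < ε → ∃ N : ℕ, ∀ n ≥ N, ∀ b : A, ‖b‖ ≤ 1 →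
      ‖w b - v (star (a n) * b)‖ ≤ ε := by
  classical
  -- the basic linear maps
  let Lv : A →ₗ[ℂ] Hv :=
    { toFun := fun a => πv a ζv
      map_add' := fun x y => by simp [map_add]
      map_smul' := fun c x => by simp [map_smul] }
  let Lw : A →ₗ[ℂ] Hw :=
    { toFun := fun a => πw a ζw
      map_add' := fun x y => by simp [map_add]
      map_smul' := fun c x => by simp [map_smul] }
  let ι : (Hv × Hw) →ₗ[ℂ] WithLp 2 (Hv × Hw) :=
    (WithLp.linearEquiv 2 ℂ (Hv × Hw)).symm.toLinearMap
  let f : A →ₗ[ℂ] WithLp 2 (Hv × Hw) := ι ∘ₗ (Lv.prod Lw)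
  let G : Submodule ℂ (WithLp 2 (Hv × Hw)) := (LinearMap.range f).topologicalClosure
  haveI : CompleteSpace G := (Submodule.isClosed_topologicalClosure _).completeSpace_coe
  let P := G.orthogonalProjectionOnto
  -- inner product identities
  have hvinner : ∀ a b : A, ⟪πv a ζv, πv b ζv⟫ = v (star a * b) := by
    intro a b
    rw [hv_rep, map_mul, map_star, ContinuousLinearMap.mul_apply,
      ContinuousLinearMap.star_eq_adjoint, ContinuousLinearMap.adjoint_inner_right]
  have hwinner : ∀ a b : A, ⟪πw a ζw, πw b ζw⟫ = w (star a * b) := by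
    intro a b
    rw [hw_rep, map_mul, map_star, ContinuousLinearMap.mul_apply,
      ContinuousLinearMap.star_eq_adjoint, ContinuousLinearMap.adjoint_inner_right]
  -- the key kernel property from absolute continuity
  have key0 : ∀ g : WithLp 2 (Hv × Hw), g ∈ G → g.fst = 0 → g = 0 := by
    intro g hg hg1
    have hg' : g ∈ closure ((LinearMap.range f : Submodule ℂ _) : Set (WithLp 2 (Hv × Hw))) := by
      rw [← Submodule.topologicalClosure_coe]; exact hg
    obtain ⟨u, hu, hulim⟩ := mem_closure_iff_seq_limit.mp hg'
    choose b hb using fun n => LinearMap.mem_range.mp (hu n)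
    have hulim' : Tendsto (fun n => f (b n)) atTop (𝓝 g) := by
      simpa only [hb] using hulim
    let pfst : WithLp 2 (Hv × Hw) →L[ℂ] Hv :=
      (ContinuousLinearMap.fst ℂ Hv Hw).comp
        (WithLp.prodContinuousLinearEquiv 2 ℂ Hv Hw : WithLp 2 (Hv × Hw) →L[ℂ] Hv × Hw)
    let psnd : WithLp 2 (Hv × Hw) →L[ℂ] Hw :=
      (ContinuousLinearMap.snd ℂ Hv Hw).comp
        (WithLp.prodContinuousLinearEquiv 2 ℂ Hv Hw : WithLp 2 (Hv × Hw) →L[ℂ] Hv × Hw)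
    have hxv : Tendsto (fun n => πv (b n) ζv) atTop (𝓝 0) := by
      have := (pfst.continuous.tendsto g).comp hulim'
      rw [← hg1]; exact this
    have hxw : Tendsto (fun n => πw (b n) ζw) atTop (𝓝 g.snd) := by
      have := (psnd.continuous.tendsto g).comp hulim'
      exact this
    have hv0 : Tendsto (fun n => v (star (b n) * b n)) atTop (𝓝 0) := by
      have : (fun n => v (star (b n) * b n))
          = fun n => ⟪πv (b n) ζv, πv (b n) ζv⟫ := funext fun n => (hvinner _ _).symm
      rw [this]
      have := hxv.inner (𝕜 := ℂ) hxv
      rwa [inner_zero_left] at this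
    have hcauchy : Tendsto (fun p : ℕ × ℕ => w (star (b p.1 - b p.2) * (b p.1 - b p.2)))
        atTop (𝓝 0) := by
      have heq : (fun p : ℕ × ℕ => w (star (b p.1 - b p.2) * (b p.1 - b p.2)))
          = fun p : ℕ × ℕ => ⟪πw (b p.1) ζw - πw (b p.2) ζw, πw (b p.1) ζw - πw (b p.2) ζw⟫ := by
        funext p
        rw [← hwinner]
        simp [map_sub]
      rw [heq]
      have h1 : Tendsto (fun p : ℕ × ℕ => πw (b p.1) ζw) atTop (𝓝 g.snd) :=
        hxw.comp (by rw [← prod_atTop_atTop_eq]; exact tendsto_fst)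
      have h2 : Tendsto (fun p : ℕ × ℕ => πw (b p.2) ζw) atTop (𝓝 g.snd) :=
        hxw.comp (by rw [← prod_atTop_atTop_eq]; exact tendsto_snd)
      have := (h1.sub h2).inner (𝕜 := ℂ) (h1.sub h2)
      rwa [sub_self, inner_zero_left] at this
    have hw0 := hac b hv0 hcauchy
    have hw0' : Tendsto (fun n => w (star (b n) * b n)) atTop (𝓝 ⟪g.snd, g.snd⟫) := by
      have : (fun n => w (star (b n) * b n))
          = fun n => ⟪πw (b n) ζw, πw (b n) ζw⟫ := funext fun n => (hwinner _ _).symm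
      rw [this]
      exact hxw.inner hxw
    have hsnd : g.snd = 0 := by
      have := tendsto_nhds_unique hw0' hw0
      rwa [inner_self_eq_zero] at this
    exact WithLp.ofLp_injective 2 (Prod.ext hg1 hsnd)
  -- density of projections of (x, 0) vectors
  let T : A →ₗ[ℂ] G := (P : WithLp 2 (Hv × Hw) →L[ℂ] G).toLinearMap ∘ₗ ι ∘ₗ
    (LinearMap.inl ℂ Hv Hw) ∘ₗ Lv
  have hT : ∀ a : A, T a = P (ι (Lv a, 0)) := fun a => rfl
  have hdense : (LinearMap.range T).topologicalClosure = ⊤ := by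
    rw [Submodule.topologicalClosure_eq_top_iff, Submodule.eq_bot_iff]
    intro g hgS
    have h1 : ∀ a : A, ⟪T a, g⟫ = (0 : ℂ) :=
      fun a => (Submodule.mem_orthogonal _ g).mp hgS _ (LinearMap.mem_range_self T a)
    have h2 : ∀ a : A, ⟪(ι (Lv a, 0) : WithLp 2 (Hv × Hw)), (g : WithLp 2 (Hv × Hw))⟫ = 0 := by
      intro a
      have horth : ⟪ι (Lv a, 0) - (P (ι (Lv a, 0)) : WithLp 2 (Hv × Hw)), (g : WithLp 2 (Hv × Hw))⟫ = 0 :=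
        G.starProjection_inner_eq_zero (ι (Lv a, 0)) (g : WithLp 2 (Hv × Hw)) g.2
      rw [inner_sub_left, sub_eq_zero] at horth
      rw [horth]
      have := h1 a
      rw [Submodule.coe_inner, hT] at this
      exact this
    have h3 : ∀ a : A, ⟪πv a ζv, (g : WithLp 2 (Hv × Hw)).fst⟫ = 0 := by
      intro a
      have := h2 a
      rw [show ⟪(ι (Lv a, 0) : WithLp 2 (Hv × Hw)), (g : WithLp 2 (Hv × Hw))⟫
        = ⟪πv a ζv, (g : WithLp 2 (Hv × Hw)).fst⟫ + ⟪(0 : Hw), (g : WithLp 2 (Hv × Hw)).snd⟫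
        from rfl, inner_zero_left, add_zero] at this
      exact this
    have h4 : (g : WithLp 2 (Hv × Hw)).fst = 0 := by
      have hall : ∀ y : Hv, ⟪y, (g : WithLp 2 (Hv × Hw)).fst⟫ = (0 : ℂ) := by
        intro y
        refine hv_cyc.induction_on y ?_ h3
        exact isClosed_eq (continuous_id.inner continuous_const) continuous_const
      have := hall (g : WithLp 2 (Hv × Hw)).fst
      rwa [inner_self_eq_zero] at this
    exact Subtype.ext (key0 _ g.2 h4)
  -- approximating sequence
  let k := P (ι (0, ζw))
  have hk : k ∈ closure (Set.range fun a : A => T a) := by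
    have hmem : k ∈ ((LinearMap.range T).topologicalClosure : Set G) := by
      rw [hdense]; trivial
    rwa [Submodule.topologicalClosure_coe, LinearMap.coe_range] at hmem
  obtain ⟨y, hy, hylim⟩ := mem_closure_iff_seq_limit.mp hk
  choose a ha using hy
  refine ⟨a, ?_⟩
  intro ε hε
  set C := Real.sqrt (‖ζv‖ ^ 2 + ‖ζw‖ ^ 2) with hCdef
  have hC0 : 0 ≤ C := Real.sqrt_nonneg _
  obtain ⟨N, hN⟩ := (Metric.tendsto_atTop.mp hylim) (ε / (C + 1)) (by positivity)
  refine ⟨N, fun n hn b hb => ?_⟩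
  have hbG : f b ∈ G := Submodule.le_topologicalClosure _ (LinearMap.mem_range_self f b)
  -- expand the difference as an inner product
  have c1 : ⟪(ι (0, ζw) : WithLp 2 (Hv × Hw)), f b⟫ = w b := by
    rw [show ⟪(ι (0, ζw) : WithLp 2 (Hv × Hw)), f b⟫
      = ⟪(0 : Hv), πv b ζv⟫ + ⟪ζw, πw b ζw⟫ from rfl, inner_zero_left, zero_add, ← hw_rep]
  have c2 : ⟪(ι (Lv (a n), 0) : WithLp 2 (Hv × Hw)), f b⟫ = v (star (a n) * b) := by
    rw [show ⟪(ι (Lv (a n), 0) : WithLp 2 (Hv × Hw)), f b⟫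
      = ⟪πv (a n) ζv, πv b ζv⟫ + ⟪(0 : Hw), πw b ζw⟫ from rfl, inner_zero_left, add_zero]
    exact hvinner _ _
  have expand : w b - v (star (a n) * b)
      = ⟪(ι (0, ζw) - ι (Lv (a n), 0) : WithLp 2 (Hv × Hw)), f b⟫ := by
    rw [inner_sub_left, c1, c2]
  -- replace by projection
  have hPu : P (ι (0, ζw) - ι (Lv (a n), 0)) = k - y n := by
    rw [map_sub]
    congr 1
    exact ha n
  have proj : ⟪(ι (0, ζw) - ι (Lv (a n), 0) : WithLp 2 (Hv × Hw)), f b⟫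
      = ⟪((k - y n : G) : WithLp 2 (Hv × Hw)), f b⟫ := by
    have horth : ⟪(ι (0, ζw) - ι (Lv (a n), 0) : WithLp 2 (Hv × Hw))
        - (P (ι (0, ζw) - ι (Lv (a n), 0)) : WithLp 2 (Hv × Hw)), f b⟫ = 0 :=
      G.starProjection_inner_eq_zero (ι (0, ζw) - ι (Lv (a n), 0)) (f b) hbG
    rw [inner_sub_left, sub_eq_zero] at horth
    rw [horth, hPu]
  -- the norm bound
  have hfb : ‖f b‖ ≤ C := by
    rw [WithLp.prod_norm_eq_of_L2, hCdef]
    apply Real.sqrt_le_sqrt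
    have e1 : ‖(f b).fst‖ ≤ ‖ζv‖ := by
      calc ‖πv b ζv‖ ≤ ‖πv b‖ * ‖ζv‖ := (πv b).le_opNorm ζv
      _ ≤ 1 * ‖ζv‖ := by
          have := my_starHom_norm_le πv b
          have : ‖πv b‖ ≤ 1 := this.trans hb
          exact mul_le_mul_of_nonneg_right this (norm_nonneg _)
      _ = ‖ζv‖ := one_mul _
    have e2 : ‖(f b).snd‖ ≤ ‖ζw‖ := by
      calc ‖πw b ζw‖ ≤ ‖πw b‖ * ‖ζw‖ := (πw b).le_opNorm ζw
      _ ≤ 1 * ‖ζw‖ := by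
          have := my_starHom_norm_le πw b
          have : ‖πw b‖ ≤ 1 := this.trans hb
          exact mul_le_mul_of_nonneg_right this (norm_nonneg _)
      _ = ‖ζw‖ := one_mul _
    have p1 : ‖(f b).fst‖ ^ 2 ≤ ‖ζv‖ ^ 2 := by
      have h0 : (0:ℝ) ≤ ‖(f b).fst‖ := norm_nonneg _
      nlinarith
    have p2 : ‖(f b).snd‖ ^ 2 ≤ ‖ζw‖ ^ 2 := by
      have h0 : (0:ℝ) ≤ ‖(f b).snd‖ := norm_nonneg _
      nlinarith
    exact add_le_add p1 p2
  have hdist : ‖((k - y n : G) : WithLp 2 (Hv × Hw))‖ < ε / (C + 1) := by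
    have h1 : ‖((k - y n : G) : WithLp 2 (Hv × Hw))‖ = ‖(k - y n : G)‖ := rfl
    rw [h1, ← dist_eq_norm, dist_comm]
    exact hN n hn
  rw [expand, proj]
  calc ‖⟪((k - y n : G) : WithLp 2 (Hv × Hw)), f b⟫‖
      ≤ ‖((k - y n : G) : WithLp 2 (Hv × Hw))‖ * ‖f b‖ := norm_inner_le_norm _ _
    _ ≤ (ε / (C + 1)) * C := by
        apply mul_le_mul (le_of_lt hdist) hfb (norm_nonneg _)
        positivity
    _ ≤ (ε / (C + 1)) * (C + 1) := by
        apply mul_le_mul_of_nonneg_left (by linarith) (by positivity)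
    _ = ε := div_mul_cancel₀ ε (by positivity)
end

section
/- Let A be a complex *-algebra, let v, w be representable positive functionals on A, and let (H_v, π_v, ζ_v) be a cyclic representation of v. Then the following are equivalent: (i) there exists C ≥ 0 such that w(a*a) ≤ C v(a*a) for all a ∈ A; (ii) there exists a bounded positive operator S ∈ B(H_v) belonging to the commutant of π_v (i.e. S π_v(a) = π_v(a) S for all a ∈ A) such that w(b*a) = ⟨S π_v(a)ζ_v, π_v(b)ζ_v⟩ for all a, b ∈ A. (Here S corresponds to W², the square of the Radon–Nikodym operator.) -/
open Filter Topology
open scoped ComplexInnerProductSpace ComplexOrder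

lemma my_extend_of_bound {A E F : Type*} [AddCommGroup A] [Module ℂ A]
    [NormedAddCommGroup E] [NormedSpace ℂ E] [NormedAddCommGroup F] [NormedSpace ℂ F]
    [CompleteSpace F]
    (L : A →ₗ[ℂ] E) (f : A →ₗ[ℂ] F) (hdense : DenseRange fun a => L a)
    (c : ℝ) (hb : ∀ a, ‖f a‖ ≤ c * ‖L a‖) :
    ∃ T : E →L[ℂ] F, ∀ a, T (L a) = f a := by
  have hker : LinearMap.ker L ≤ LinearMap.ker f := by
    intro a ha
    have h0 : L a = 0 := ha
    have := hb a
    rw [h0, norm_zero, mul_zero] at this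
    exact LinearMap.mem_ker.2 (norm_le_zero_iff.1 this)
  set g : (A ⧸ LinearMap.ker L) →ₗ[ℂ] F := (LinearMap.ker L).liftQ f hker with hg
  set eqv := L.quotKerEquivRange with heqv
  set f' : LinearMap.range L →ₗ[ℂ] F := g.comp (eqv.symm : LinearMap.range L →ₗ[ℂ] _) with hf'
  have key : ∀ (a : A) (h : L a ∈ LinearMap.range L), f' ⟨L a, h⟩ = f a := by
    intro a h
    have : eqv.symm ⟨L a, h⟩ = Submodule.Quotient.mk a :=
      L.quotKerEquivRange_symm_apply_image a h
    simp [hf', this, hg, Submodule.liftQ_apply]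
  have hbound : ∀ x : LinearMap.range L, ‖f' x‖ ≤ c * ‖x‖ := by
    rintro ⟨x, hx⟩
    obtain ⟨a, rfl⟩ := hx
    rw [key a ⟨a, rfl⟩]
    exact hb a
  set fc : LinearMap.range L →L[ℂ] F := f'.mkContinuous c hbound with hfc
  have hsub_dense : DenseRange ((LinearMap.range L).subtypeL : LinearMap.range L →L[ℂ] E) := by
    have : Set.range ((LinearMap.range L).subtypeL : LinearMap.range L → E)
        = Set.range fun a => L a := by
      ext x
      simp [Submodule.coe_subtypeL', LinearMap.mem_range]
    unfold DenseRange
    rw [this]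
    exact hdense
  have hind : IsUniformInducing ((LinearMap.range L).subtypeL : LinearMap.range L →L[ℂ] E) :=
    isUniformEmbedding_subtype_val.isUniformInducing
  refine ⟨fc.extend (LinearMap.range L).subtypeL, fun a => ?_⟩
  have : (LinearMap.range L).subtypeL ⟨L a, ⟨a, rfl⟩⟩ = L a := rfl
  rw [← this, ContinuousLinearMap.extend_eq _ hsub_dense hind]
  exact key a ⟨a, rfl⟩

lemma my_rep_inner {A : Type*} [NonUnitalRing A] [Module ℂ A] [SMulCommClass ℂ A A]
    [IsScalarTower ℂ A A] [StarRing A] [StarModule ℂ A]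
    {H : Type*} [NormedAddCommGroup H] [InnerProductSpace ℂ H] [CompleteSpace H]
    (π : A →⋆ₙₐ[ℂ] (H →L[ℂ] H)) (ζ : H) (a b : A) :
    ⟪ζ, π (star b * a) ζ⟫ = ⟪π b ζ, π a ζ⟫ := by
  rw [map_mul, ContinuousLinearMap.mul_apply, map_star,
    ContinuousLinearMap.star_eq_adjoint, ContinuousLinearMap.adjoint_inner_right]

/-- **Proposition.** Let `v, w` be representable positive functionals on a complex
`*`-algebra `A` and `(Hv, πv, ζv)` a cyclic representation of `v`.  Then `w ≤ C v` for
some `C ≥ 0` iff there is a bounded positive operator `S` in the commutant of `πv` with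
`w (star b * a) = ⟨S πv(a) ζv, πv(b) ζv⟩` for all `a, b ∈ A`.
(The paper-style inner product `⟨·,·⟩`, linear in the first variable, corresponds to
`⟪·,·⟫` with swapped arguments in Mathlib's convention.) -/
theorem domination_iff_bounded_commutant
    {A : Type*} [NonUnitalRing A] [Module ℂ A] [SMulCommClass ℂ A A]
    [IsScalarTower ℂ A A] [StarRing A] [StarModule ℂ A]
    (v w : A →ₗ[ℂ] ℂ)
    (hv : ∀ a : A, 0 ≤ v (star a * a)) (hw : ∀ a : A, 0 ≤ w (star a * a))
    {Hv : Type*} [NormedAddCommGroup Hv] [InnerProductSpace ℂ Hv] [CompleteSpace Hv]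
    (πv : A →⋆ₙₐ[ℂ] (Hv →L[ℂ] Hv)) (ζv : Hv)
    (hv_cyc : DenseRange fun a : A => πv a ζv)
    (hv_rep : ∀ a : A, v a = ⟪ζv, πv a ζv⟫)
    {Hw : Type*} [NormedAddCommGroup Hw] [InnerProductSpace ℂ Hw] [CompleteSpace Hw]
    (πw : A →⋆ₙₐ[ℂ] (Hw →L[ℂ] Hw)) (ζw : Hw)
    (hw_cyc : DenseRange fun a : A => πw a ζw)
    (hw_rep : ∀ a : A, w a = ⟪ζw, πw a ζw⟫) :
    (∃ C : ℝ, 0 ≤ C ∧ ∀ a : A, (w (star a * a)).re ≤ C * (v (star a * a)).re) ↔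
      (∃ S : Hv →L[ℂ] Hv,
        (∀ ξ : Hv, 0 ≤ ⟪ξ, S ξ⟫) ∧
        (∀ (a : A) (ξ : Hv), S (πv a ξ) = πv a (S ξ)) ∧
        (∀ a b : A, w (star b * a) = ⟪πv b ζv, S (πv a ζv)⟫)) := by
  have hvn : ∀ a : A, (v (star a * a)).re = ‖πv a ζv‖ ^ 2 := by
    intro a
    rw [hv_rep, my_rep_inner]
    simp only [← RCLike.re_eq_complex_re]
    exact inner_self_eq_norm_sq _
  have hwn : ∀ a : A, (w (star a * a)).re = ‖πw a ζw‖ ^ 2 := by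
    intro a
    rw [hw_rep, my_rep_inner]
    simp only [← RCLike.re_eq_complex_re]
    exact inner_self_eq_norm_sq _
  constructor
  · rintro ⟨C, hC0, hCle⟩
    set L : A →ₗ[ℂ] Hv :=
      { toFun := fun a => πv a ζv
        map_add' := by intro x y; simp
        map_smul' := by intro c x; simp } with hL
    set fw : A →ₗ[ℂ] Hw :=
      { toFun := fun a => πw a ζw
        map_add' := by intro x y; simp
        map_smul' := by intro c x; simp } with hfw
    have hb : ∀ a : A, ‖fw a‖ ≤ Real.sqrt C * ‖L a‖ := by
      intro a
      have h1 : ‖πw a ζw‖ ^ 2 ≤ C * ‖πv a ζv‖ ^ 2 := by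
        rw [← hwn, ← hvn]; exact hCle a
      have h2 : ‖πw a ζw‖ = Real.sqrt (‖πw a ζw‖ ^ 2) := by
        rw [Real.sqrt_sq (norm_nonneg _)]
      rw [show fw a = πw a ζw from rfl, show L a = πv a ζv from rfl, h2]
      calc Real.sqrt (‖πw a ζw‖ ^ 2) ≤ Real.sqrt (C * ‖πv a ζv‖ ^ 2) :=
            Real.sqrt_le_sqrt h1
        _ = Real.sqrt C * ‖πv a ζv‖ := by
            rw [Real.sqrt_mul hC0, Real.sqrt_sq (norm_nonneg _)]
    obtain ⟨T, hT⟩ := my_extend_of_bound L fw hv_cyc (Real.sqrt C) hb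
    have hT' : ∀ a : A, T (πv a ζv) = πw a ζw := hT
    have hTint : ∀ (a : A) (ξ : Hv), T (πv a ξ) = πw a (T ξ) := by
      intro a
      have heq : (fun ξ => T (πv a ξ)) = fun ξ => πw a (T ξ) := by
        apply hv_cyc.equalizer
          (T.continuous.comp (πv a).continuous)
          ((πw a).continuous.comp T.continuous)
        funext b
        show T (πv a (πv b ζv)) = πw a (T (πv b ζv))
        rw [hT' b, ← ContinuousLinearMap.mul_apply, ← map_mul, hT' (a * b), map_mul,
          ContinuousLinearMap.mul_apply]
      exact fun ξ => congrFun heq ξ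
    refine ⟨(ContinuousLinearMap.adjoint T).comp T, ?_, ?_, ?_⟩
    · intro ξ
      have hTT : ⟪ξ, ((ContinuousLinearMap.adjoint T).comp T) ξ⟫ = ⟪T ξ, T ξ⟫ := by
        simp [ContinuousLinearMap.adjoint_inner_right]
      rw [hTT, Complex.nonneg_iff]
      simp only [← RCLike.re_eq_complex_re, ← RCLike.im_eq_complex_im]
      exact ⟨inner_self_nonneg, (inner_self_im (𝕜 := ℂ) _).symm⟩
    · intro a ξ
      have h1 : (πw (star a)).comp T = T.comp (πv (star a)) := by
        ext η; exact (hTint (star a) η).symm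
      have h2 := congrArg ContinuousLinearMap.adjoint h1
      rw [ContinuousLinearMap.adjoint_comp, ContinuousLinearMap.adjoint_comp] at h2
      have haw : ContinuousLinearMap.adjoint (πw (star a)) = πw a := by
        rw [← ContinuousLinearMap.star_eq_adjoint, ← map_star, star_star]
      have hav : ContinuousLinearMap.adjoint (πv (star a)) = πv a := by
        rw [← ContinuousLinearMap.star_eq_adjoint, ← map_star, star_star]
      rw [haw, hav] at h2
      show ContinuousLinearMap.adjoint T (T (πv a ξ))
          = πv a (ContinuousLinearMap.adjoint T (T ξ))
      rw [hTint a ξ]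
      have := congrFun (congrArg (fun (f : Hw →L[ℂ] Hv) => (f : Hw → Hv)) h2) (T ξ)
      simpa using this
    · intro a b
      rw [hw_rep, my_rep_inner, ← hT' a, ← hT' b]
      show ⟪T (πv b ζv), T (πv a ζv)⟫ = ⟪πv b ζv, (ContinuousLinearMap.adjoint T) (T (πv a ζv))⟫
      rw [ContinuousLinearMap.adjoint_inner_right]
  · rintro ⟨S, hpos, hcomm, hrep⟩
    refine ⟨‖S‖, norm_nonneg _, fun a => ?_⟩
    have h1 : w (star a * a) = ⟪πv a ζv, S (πv a ζv)⟫ := hrep a a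
    calc (w (star a * a)).re = (⟪πv a ζv, S (πv a ζv)⟫ : ℂ).re := by rw [h1]
      _ ≤ ‖(⟪πv a ζv, S (πv a ζv)⟫ : ℂ)‖ := Complex.re_le_norm _
      _ ≤ ‖πv a ζv‖ * ‖S (πv a ζv)‖ := norm_inner_le_norm _ _
      _ ≤ ‖πv a ζv‖ * (‖S‖ * ‖πv a ζv‖) :=
          mul_le_mul_of_nonneg_left (S.le_opNorm _) (norm_nonneg _)
      _ = ‖S‖ * ‖πv a ζv‖ ^ 2 := by ring
      _ = ‖S‖ * (v (star a * a)).re := by rw [hvn]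
end

section
/- Let A be a complex *-algebra, let v, w be representable positive functionals on A, and let (H_v, π_v, ζ_v) be a cyclic representation of v. Assume that there exists C ≥ 0 with w(a*a) ≤ C v(a*a) for all a ∈ A, and that π_v is irreducible, i.e. every bounded operator T ∈ B(H_v) satisfying T π_v(a) = π_v(a) T for all a ∈ A is a complex scalar multiple of the identity. Then there exists α ≥ 0 such that w(a) = α v(a) for all a ∈ A. -/
open Filter Topology
open scoped ComplexInnerProductSpace ComplexOrder

/-- **Corollary.** Let `v, w` be representable positive functionals on a complex
`*`-algebra `A` with `w ≤ C v` for some `C ≥ 0`, and let `(Hv, πv, ζv)` be a cyclic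
representation of `v` with `πv` irreducible (every bounded operator commuting with the
range of `πv` is a scalar multiple of the identity).  Then `w = α v` for some `α ≥ 0`. -/
theorem proportional_of_dominated_of_irreducible
    {A : Type*} [NonUnitalRing A] [Module ℂ A] [SMulCommClass ℂ A A]
    [IsScalarTower ℂ A A] [StarRing A] [StarModule ℂ A]
    (v w : A →ₗ[ℂ] ℂ)
    (hv : ∀ a : A, 0 ≤ v (star a * a)) (hw : ∀ a : A, 0 ≤ w (star a * a))
    {Hv : Type*} [NormedAddCommGroup Hv] [InnerProductSpace ℂ Hv] [CompleteSpace Hv]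
    (πv : A →⋆ₙₐ[ℂ] (Hv →L[ℂ] Hv)) (ζv : Hv)
    (hv_cyc : DenseRange fun a : A => πv a ζv)
    (hv_rep : ∀ a : A, v a = ⟪ζv, πv a ζv⟫)
    {Hw : Type*} [NormedAddCommGroup Hw] [InnerProductSpace ℂ Hw] [CompleteSpace Hw]
    (πw : A →⋆ₙₐ[ℂ] (Hw →L[ℂ] Hw)) (ζw : Hw)
    (hw_cyc : DenseRange fun a : A => πw a ζw)
    (hw_rep : ∀ a : A, w a = ⟪ζw, πw a ζw⟫)
    (hdom : ∃ C : ℝ, 0 ≤ C ∧ ∀ a : A, (w (star a * a)).re ≤ C * (v (star a * a)).re)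
    (hirr : ∀ S : Hv →L[ℂ] Hv,
      (∀ (a : A) (ξ : Hv), S (πv a ξ) = πv a (S ξ)) →
      ∃ c : ℂ, S = c • (1 : Hv →L[ℂ] Hv)) :
    ∃ α : ℝ, 0 ≤ α ∧ ∀ a : A, w a = (α : ℂ) * v a := by
  classical
  obtain ⟨C, hC, hCle⟩ := hdom
  -- the two orbit maps
  set Φ : A →ₗ[ℂ] Hv :=
    { toFun := fun a => πv a ζv
      map_add' := fun a b => by simp
      map_smul' := fun c a => by simp } with hΦdef
  set Ψ : A →ₗ[ℂ] Hw :=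
    { toFun := fun a => πw a ζw
      map_add' := fun a b => by simp
      map_smul' := fun c a => by simp } with hΨdef
  have hΦa : ∀ a : A, Φ a = πv a ζv := fun a => rfl
  have hΨa : ∀ a : A, Ψ a = πw a ζw := fun a => rfl
  -- norm identities
  have hvnorm : ∀ a : A, v (star a * a) = (‖Φ a‖ : ℂ) ^ 2 := by
    intro a
    rw [hv_rep, map_mul, ContinuousLinearMap.mul_apply, map_star,
      ContinuousLinearMap.star_eq_adjoint, ContinuousLinearMap.adjoint_inner_right,
      ← hΦa, inner_self_eq_norm_sq_to_K]
    norm_cast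
  have hwnorm : ∀ a : A, w (star a * a) = (‖Ψ a‖ : ℂ) ^ 2 := by
    intro a
    rw [hw_rep, map_mul, ContinuousLinearMap.mul_apply, map_star,
      ContinuousLinearMap.star_eq_adjoint, ContinuousLinearMap.adjoint_inner_right,
      ← hΨa, inner_self_eq_norm_sq_to_K]
    norm_cast
  have hbound : ∀ a : A, ‖Ψ a‖ ≤ Real.sqrt C * ‖Φ a‖ := by
    intro a
    have h1 : ‖Ψ a‖ ^ 2 ≤ C * ‖Φ a‖ ^ 2 := by
      have h := hCle a
      rw [hvnorm, hwnorm, ← Complex.ofReal_pow, ← Complex.ofReal_pow,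
        Complex.ofReal_re, Complex.ofReal_re] at h
      exact h
    have h2 : ‖Ψ a‖ = Real.sqrt (‖Ψ a‖ ^ 2) := (Real.sqrt_sq (norm_nonneg _)).symm
    rw [h2]
    calc Real.sqrt (‖Ψ a‖ ^ 2) ≤ Real.sqrt (C * ‖Φ a‖ ^ 2) := Real.sqrt_le_sqrt h1
      _ = Real.sqrt C * ‖Φ a‖ := by
          rw [Real.sqrt_mul hC, Real.sqrt_sq (norm_nonneg _)]
  -- kernel inclusion
  have hker : LinearMap.ker Φ ≤ LinearMap.ker Ψ := by
    intro a ha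
    have ha' : Φ a = 0 := ha
    have := hbound a
    rw [ha', norm_zero, mul_zero] at this
    exact norm_le_zero_iff.1 this
  -- the densely defined intertwiner, as a continuous map on the range of Φ
  set g₀ : (A ⧸ LinearMap.ker Φ) →ₗ[ℂ] Hw := (LinearMap.ker Φ).liftQ Ψ hker with hg₀def
  set e : (A ⧸ LinearMap.ker Φ) ≃ₗ[ℂ] LinearMap.range Φ := Φ.quotKerEquivRange with hedef
  set g₁ : (LinearMap.range Φ) →ₗ[ℂ] Hw := g₀ ∘ₗ (e.symm : LinearMap.range Φ →ₗ[ℂ] _)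
    with hg₁def
  have hg₁ : ∀ a : A, g₁ ⟨Φ a, LinearMap.mem_range_self Φ a⟩ = Ψ a := by
    intro a
    have h1 : e (Submodule.Quotient.mk a) = ⟨Φ a, LinearMap.mem_range_self Φ a⟩ :=
      Subtype.ext (Φ.quotKerEquivRange_apply_mk a)
    have h2 : e.symm ⟨Φ a, LinearMap.mem_range_self Φ a⟩ = Submodule.Quotient.mk a := by
      rw [← h1, LinearEquiv.symm_apply_apply]
    simp only [hg₁def, LinearMap.comp_apply, LinearEquiv.coe_coe, h2]
    rfl
  have hg₁bound : ∀ x : LinearMap.range Φ, ‖g₁ x‖ ≤ Real.sqrt C * ‖x‖ := by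
    rintro ⟨x, a, rfl⟩
    rw [hg₁ a]
    exact hbound a
  set g : (LinearMap.range Φ) →L[ℂ] Hw := g₁.mkContinuous (Real.sqrt C) hg₁bound with hgdef
  have hgapp : ∀ a : A, g ⟨Φ a, LinearMap.mem_range_self Φ a⟩ = Ψ a := fun a => hg₁ a
  -- density of the range of Φ
  have hdense : Dense (↑(LinearMap.range Φ) : Set Hv) := by
    have : (↑(LinearMap.range Φ) : Set Hv) = Set.range fun a : A => πv a ζv := by
      rw [LinearMap.coe_range]; rfl
    rw [this]; exact hv_cyc
  have hdr : DenseRange ((LinearMap.range Φ).subtypeL : LinearMap.range Φ →L[ℂ] Hv) :=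
    hdense.denseRange_val
  have hui : IsUniformInducing ((LinearMap.range Φ).subtypeL : LinearMap.range Φ →L[ℂ] Hv) :=
    isometry_subtype_coe.isUniformInducing
  -- the intertwiner V : Hv → Hw
  set V : Hv →L[ℂ] Hw := g.extend (LinearMap.range Φ).subtypeL with hVdef
  have hVΦ : ∀ a : A, V (Φ a) = Ψ a := by
    intro a
    have := ContinuousLinearMap.extend_eq g hdr hui
      ⟨Φ a, LinearMap.mem_range_self Φ a⟩
    rw [← hVdef] at this
    simpa [hgapp a] using this
  -- V intertwines the representations
  have hcomm : ∀ (a : A) (ξ : Hv), V (πv a ξ) = πw a (V ξ) := by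
    intro a
    have : (fun ξ => V (πv a ξ)) = fun ξ => πw a (V ξ) := by
      refine hv_cyc.equalizer (V.continuous.comp (πv a).continuous)
        ((πw a).continuous.comp V.continuous) ?_
      funext b
      show V (πv a (πv b ζv)) = πw a (V (πv b ζv))
      rw [← ContinuousLinearMap.mul_apply, ← map_mul, ← hΦa, hVΦ, ← hΦa, hVΦ, hΨa, hΨa,
        ← ContinuousLinearMap.mul_apply, ← map_mul]
    exact fun ξ => congrFun this ξ
  -- hence V† intertwines them in the opposite direction
  have hadjπ : ∀ a : A, ContinuousLinearMap.adjoint (πw a) = πw (star a) := by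
    intro a
    rw [← ContinuousLinearMap.star_eq_adjoint, ← map_star]
  have hadjπv : ∀ a : A, ContinuousLinearMap.adjoint (πv a) = πv (star a) := by
    intro a
    rw [← ContinuousLinearMap.star_eq_adjoint, ← map_star]
  have hcomm' : ∀ (a : A) (ξ : Hw),
      ContinuousLinearMap.adjoint V (πw a ξ) = πv a (ContinuousLinearMap.adjoint V ξ) := by
    intro a ξ
    refine ext_inner_left ℂ fun ν => ?_
    rw [ContinuousLinearMap.adjoint_inner_right]
    have h1 : ⟪V ν, πw a ξ⟫ = ⟪πw (star a) (V ν), ξ⟫ := by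
      rw [← hadjπ a, ContinuousLinearMap.adjoint_inner_left]
    rw [h1, ← hcomm (star a) ν, ← ContinuousLinearMap.adjoint_inner_right,
      ← ContinuousLinearMap.adjoint_inner_right (πv (star a)), hadjπv, star_star]
  -- T = V† V commutes with the representation, hence is scalar
  set T : Hv →L[ℂ] Hv := (ContinuousLinearMap.adjoint V).comp V with hTdef
  have hTcomm : ∀ (a : A) (ξ : Hv), T (πv a ξ) = πv a (T ξ) := by
    intro a ξ
    show ContinuousLinearMap.adjoint V (V (πv a ξ)) = πv a (ContinuousLinearMap.adjoint V (V ξ))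
    rw [hcomm a ξ, hcomm' a (V ξ)]
  obtain ⟨c, hc⟩ := hirr T hTcomm
  have hVV : ∀ ξ η : Hv, ⟪V ξ, V η⟫ = c * ⟪ξ, η⟫ := by
    intro ξ η
    have h1 : ⟪V ξ, V η⟫ = ⟪ξ, T η⟫ := by
      rw [hTdef]
      show ⟪V ξ, V η⟫ = ⟪ξ, ContinuousLinearMap.adjoint V (V η)⟫
      rw [ContinuousLinearMap.adjoint_inner_right]
    rw [h1, hc]
    simp [inner_smul_right]
  -- the defect vector δ is annihilated by the representation
  set δ : Hw := V ζv - ζw with hδdef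
  have hπδ : ∀ b : A, πw b δ = 0 := by
    intro b
    have h1 : πw b (V ζv) = πw b ζw := by
      rw [← hcomm b ζv, ← hΦa, hVΦ, hΨa]
    rw [hδdef, map_sub, h1, sub_self]
  -- the main identity : w a = c * v a
  have hwc : ∀ a : A, w a = c * v a := by
    intro a
    have hζw : ζw = V ζv - δ := by rw [hδdef]; abel
    have hπa : πw a ζw = πw a (V ζv) := by
      rw [hζw, map_sub, hπδ a, sub_zero]
    have hδterm : ⟪δ, πw a (V ζv)⟫ = 0 := by
      have : πw a = ContinuousLinearMap.adjoint (πw (star a)) := by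
        rw [hadjπ, star_star]
      rw [this, ContinuousLinearMap.adjoint_inner_right, hπδ, inner_zero_left]
    have hmain : ⟪V ζv, πw a (V ζv)⟫ = c * v a := by
      rw [← hcomm a ζv, hVV, hv_rep]
    rw [hw_rep, hπa, hζw, inner_sub_left, hδterm, sub_zero, hmain]
  -- extract a nonnegative real constant
  by_cases hex : ∃ a₀ : A, v a₀ ≠ 0
  · obtain ⟨a₀, ha₀⟩ := hex
    have hξne : πv a₀ ζv ≠ 0 := by
      intro h
      apply ha₀
      rw [hv_rep, h, inner_zero_right]
    set ξ : Hv := πv a₀ ζv with hξdef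
    have hnorm : (‖V ξ‖ : ℂ) ^ 2 = c * (‖ξ‖ : ℂ) ^ 2 := by
      have h := hVV ξ ξ
      rw [inner_self_eq_norm_sq_to_K, inner_self_eq_norm_sq_to_K] at h
      exact_mod_cast h
    have hξnorm : (‖ξ‖ : ℝ) ≠ 0 := norm_ne_zero_iff.2 hξne
    have hξnormC : (‖ξ‖ : ℂ) ≠ 0 := by exact_mod_cast hξnorm
    refine ⟨(‖V ξ‖ / ‖ξ‖) ^ 2, by positivity, fun a => ?_⟩
    have hcval : ((((‖V ξ‖ / ‖ξ‖) ^ 2 : ℝ)) : ℂ) = c := by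
      push_cast
      rw [div_pow, hnorm, mul_div_assoc, div_self (pow_ne_zero 2 hξnormC), mul_one]
    rw [hwc a, hcval]
  · push_neg at hex
    refine ⟨0, le_refl 0, fun a => ?_⟩
    rw [hwc a, hex a, mul_zero, Complex.ofReal_zero, zero_mul]
end

section
/- Let A be a C*-algebra and let v, w be positive linear functionals on A, each admitting a cyclic representation. Assume that v is pure, i.e. v admits a cyclic representation (H_v, π_v, ζ_v) in which π_v is irreducible (every bounded operator T ∈ B(H_v) with T π_v(a) = π_v(a) T for all a ∈ A is a complex scalar multiple of the identity). Then w is absolutely continuous with respect to v if and only if there exists α ≥ 0 such that w(a) = α v(a) for all a ∈ A. -/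
open Filter Topology
open scoped ComplexInnerProductSpace ComplexOrder

section AuxVanish

open scoped ComplexStarModule

/-- A linear functional on a (non-unital) C⋆-algebra vanishing on all elements of the form
`star b * b` vanishes identically. -/
lemma aux_vanish_of_vanish_on_star_mul_self
    {A : Type*} [NonUnitalNormedRing A] [StarRing A] [CStarRing A] [CompleteSpace A]
    [NormedSpace ℂ A] [SMulCommClass ℂ A A] [IsScalarTower ℂ A A] [StarModule ℂ A]
    (φ : A →ₗ[ℂ] ℂ) (h : ∀ b : A, φ (star b * b) = 0) (a : A) : φ a = 0 := by
  letI : NonUnitalCStarAlgebra A := { }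
  have key : ∀ x : A, IsSelfAdjoint x → φ x = 0 := by
    intro x hx
    have hcont : Continuous fun t : ℝ => Real.sqrt (max t 0) :=
      Real.continuous_sqrt.comp (continuous_id.max continuous_const)
    have hcont' : Continuous fun t : ℝ => Real.sqrt (max (-t) 0) :=
      Real.continuous_sqrt.comp (continuous_neg.max continuous_const)
    set b := cfcₙ (fun t : ℝ => Real.sqrt (max t 0)) x with hbdef
    set c := cfcₙ (fun t : ℝ => Real.sqrt (max (-t) 0)) x with hcdef
    have hbsa : IsSelfAdjoint b := cfcₙ_predicate _ x
    have hcsa : IsSelfAdjoint c := cfcₙ_predicate _ x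
    have h1 : star b * b = cfcₙ (fun t : ℝ => max t 0) x := by
      rw [hbsa.star_eq, hbdef, ← cfcₙ_mul _ _ x (hcont.continuousOn) (by simp)
        (hcont.continuousOn) (by simp)]
      exact cfcₙ_congr fun t _ => Real.mul_self_sqrt (le_max_right _ _)
    have h2 : star c * c = cfcₙ (fun t : ℝ => max (-t) 0) x := by
      rw [hcsa.star_eq, hcdef, ← cfcₙ_mul _ _ x (hcont'.continuousOn) (by simp)
        (hcont'.continuousOn) (by simp)]
      exact cfcₙ_congr fun t _ => Real.mul_self_sqrt (le_max_right _ _)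
    have h3 : star b * b - star c * c = x := by
      rw [h1, h2, ← cfcₙ_sub (fun t : ℝ => max t 0) (fun t : ℝ => max (-t) 0) x
        ((continuous_id.max continuous_const).continuousOn) (by simp)
        ((continuous_neg.max continuous_const).continuousOn) (by simp)]
      calc cfcₙ (fun t : ℝ => max t 0 - max (-t) 0) x
          = cfcₙ (id : ℝ → ℝ) x := by
            refine cfcₙ_congr fun t _ => ?_
            rcases le_total t 0 with ht | ht
            · simp [max_eq_right ht, max_eq_left (neg_nonneg.mpr ht)]
            · simp [max_eq_left ht, max_eq_right (neg_nonpos.mpr ht)]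
        _ = x := cfcₙ_id ℝ x
    rw [← h3, map_sub, h, h, sub_zero]
  have hdecomp := realPart_add_I_smul_imaginaryPart a
  conv_lhs => rw [← hdecomp]
  rw [map_add, map_smul, key _ (ℜ a).2, key _ (ℑ a).2, smul_zero, add_zero]

end AuxVanish

/-- If a closed subspace `K` is invariant under a pair of mutually adjoint operators, then
the orthogonal projection onto `K` commutes with them. -/
lemma aux_orthProj_comm {E : Type*} [NormedAddCommGroup E] [InnerProductSpace ℂ E]
    (K : Submodule ℂ E) [K.HasOrthogonalProjection]
    (S T : E →L[ℂ] E) (hST : ∀ x y : E, ⟪S x, y⟫ = ⟪x, T y⟫)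
    (hS : ∀ x ∈ K, S x ∈ K) (hT : ∀ x ∈ K, T x ∈ K) (x : E) :
    (Submodule.orthogonalProjectionOnto K (S x) : E) = S (Submodule.orthogonalProjectionOnto K x) := by
  have hdecomp : S x = S ((Submodule.orthogonalProjectionOnto K x : E)) + S (x - Submodule.orthogonalProjectionOnto K x) := by
    rw [← map_add, add_sub_cancel]
  have h1 : (Submodule.orthogonalProjectionOnto K (S (Submodule.orthogonalProjectionOnto K x)) : E)
      = S (Submodule.orthogonalProjectionOnto K x) :=
    Submodule.starProjection_eq_self_iff.mpr (hS _ (Submodule.orthogonalProjectionOnto K x).2)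
  have hmem : S (x - Submodule.orthogonalProjectionOnto K x) ∈ Kᗮ := by
    rw [Submodule.mem_orthogonal]
    intro u hu
    rw [← inner_conj_symm, hST, (Submodule.mem_orthogonal' K (x - (Submodule.orthogonalProjectionOnto K x : E))).mp
      (Submodule.sub_starProjection_mem_orthogonal (K := K) x :
        x - (Submodule.orthogonalProjectionOnto K x : E) ∈ Kᗮ) _ (hT u hu), map_zero]
  have h2 : Submodule.orthogonalProjectionOnto K (S (x - Submodule.orthogonalProjectionOnto K x)) = 0 :=
    Submodule.orthogonalProjectionOnto_apply_of_mem_orthogonal hmem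
  rw [hdecomp, map_add, h2]
  push_cast
  rw [h1, add_zero]

section ProdSpace

variable {Hv Hw : Type*} [NormedAddCommGroup Hv] [InnerProductSpace ℂ Hv]
  [NormedAddCommGroup Hw] [InnerProductSpace ℂ Hw]

/-- Elements of the Hilbert space direct sum. -/
noncomputable def mkE (x : Hv) (y : Hw) : WithLp 2 (Hv × Hw) :=
  (WithLp.equiv 2 (Hv × Hw)).symm (x, y)

noncomputable def eE : WithLp 2 (Hv × Hw) ≃L[ℂ] Hv × Hw :=
  WithLp.prodContinuousLinearEquiv 2 ℂ Hv Hw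

noncomputable def Efst : WithLp 2 (Hv × Hw) →L[ℂ] Hv :=
  (ContinuousLinearMap.fst ℂ Hv Hw).comp (eE (Hv := Hv) (Hw := Hw)).toContinuousLinearMap

noncomputable def Esnd : WithLp 2 (Hv × Hw) →L[ℂ] Hw :=
  (ContinuousLinearMap.snd ℂ Hv Hw).comp (eE (Hv := Hv) (Hw := Hw)).toContinuousLinearMap

noncomputable def inlE : Hv →L[ℂ] WithLp 2 (Hv × Hw) :=
  (eE (Hv := Hv) (Hw := Hw)).symm.toContinuousLinearMap.comp (ContinuousLinearMap.inl ℂ Hv Hw)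

/-- The direct sum of two operators, as an operator on the Hilbert space direct sum. -/
noncomputable def rhoE (f : Hv →L[ℂ] Hv) (g : Hw →L[ℂ] Hw) :
    WithLp 2 (Hv × Hw) →L[ℂ] WithLp 2 (Hv × Hw) :=
  (eE (Hv := Hv) (Hw := Hw)).symm.toContinuousLinearMap.comp
    ((f.prodMap g).comp (eE (Hv := Hv) (Hw := Hw)).toContinuousLinearMap)

lemma mkE_eta (z : WithLp 2 (Hv × Hw)) : mkE (Efst z) (Esnd z) = z := rfl

lemma rhoE_apply (f : Hv →L[ℂ] Hv) (g : Hw →L[ℂ] Hw) (z : WithLp 2 (Hv × Hw)) :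
    rhoE f g z = mkE (f (Efst z)) (g (Esnd z)) := rfl

lemma inner_mkE (x x' : Hv) (y y' : Hw) :
    ⟪mkE x y, mkE x' y'⟫ = ⟪x, x'⟫ + ⟪y, y'⟫ := rfl

end ProdSpace

set_option maxHeartbeats 1000000 in
set_option synthInstance.maxHeartbeats 400000 in
/-- **Corollary.** Let `A` be a C*-algebra and let `v, w` be positive functionals on `A`
admitting cyclic representations.  If `v` is pure, i.e. it admits a cyclic representation
`(Hv, πv, ζv)` with `πv` irreducible, then `w` is absolutely continuous with respect to
`v` iff `w = α v` for some `α ≥ 0`. -/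
theorem abs_continuous_iff_scalar_multiple_of_pure
    {A : Type*} [NonUnitalNormedRing A] [StarRing A] [CStarRing A] [CompleteSpace A]
    [NormedSpace ℂ A] [SMulCommClass ℂ A A] [IsScalarTower ℂ A A] [StarModule ℂ A]
    (v w : A →ₗ[ℂ] ℂ)
    (hv : ∀ a : A, 0 ≤ v (star a * a)) (hw : ∀ a : A, 0 ≤ w (star a * a))
    {Hv : Type*} [NormedAddCommGroup Hv] [InnerProductSpace ℂ Hv] [CompleteSpace Hv]
    (πv : A →⋆ₙₐ[ℂ] (Hv →L[ℂ] Hv)) (ζv : Hv)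
    (hv_cyc : DenseRange fun a : A => πv a ζv)
    (hv_rep : ∀ a : A, v a = ⟪ζv, πv a ζv⟫)
    (hirr : ∀ S : Hv →L[ℂ] Hv,
      (∀ (a : A) (ξ : Hv), S (πv a ξ) = πv a (S ξ)) →
      ∃ c : ℂ, S = c • (1 : Hv →L[ℂ] Hv))
    {Hw : Type*} [NormedAddCommGroup Hw] [InnerProductSpace ℂ Hw] [CompleteSpace Hw]
    (πw : A →⋆ₙₐ[ℂ] (Hw →L[ℂ] Hw)) (ζw : Hw)
    (hw_cyc : DenseRange fun a : A => πw a ζw)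
    (hw_rep : ∀ a : A, w a = ⟪ζw, πw a ζw⟫) :
    FunctionalAC w v ↔ ∃ α : ℝ, 0 ≤ α ∧ ∀ a : A, w a = (α : ℂ) * v a := by
  have hadjv : ∀ b : A, πv (star b) = ContinuousLinearMap.adjoint (πv b) := fun b => by
    rw [← ContinuousLinearMap.star_eq_adjoint, map_star]
  have hadjw : ∀ b : A, πw (star b) = ContinuousLinearMap.adjoint (πw b) := fun b => by
    rw [← ContinuousLinearMap.star_eq_adjoint, map_star]
  have hmv : ∀ (b : A) (ξ η : Hv), ⟪πv b ξ, η⟫ = ⟪ξ, πv (star b) η⟫ := by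
    intro b ξ η
    rw [hadjv, ContinuousLinearMap.adjoint_inner_right]
  have hmw : ∀ (b : A) (ξ η : Hw), ⟪πw b ξ, η⟫ = ⟪ξ, πw (star b) η⟫ := by
    intro b ξ η
    rw [hadjw, ContinuousLinearMap.adjoint_inner_right]
  have hVin : ∀ a : A, v (star a * a) = ⟪πv a ζv, πv a ζv⟫ := by
    intro a
    rw [hv_rep, map_mul, ContinuousLinearMap.mul_apply, hadjv,
      ContinuousLinearMap.adjoint_inner_right]
  have hWin : ∀ a : A, w (star a * a) = ⟪πw a ζw, πw a ζw⟫ := by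
    intro a
    rw [hw_rep, map_mul, ContinuousLinearMap.mul_apply, hadjw,
      ContinuousLinearMap.adjoint_inner_right]
  have hVn : ∀ a : A, v (star a * a) = ((‖πv a ζv‖ : ℂ)) ^ 2 := fun a => by
    rw [hVin, inner_self_eq_norm_sq_to_K]
    rfl
  have hWn : ∀ a : A, w (star a * a) = ((‖πw a ζw‖ : ℂ)) ^ 2 := fun a => by
    rw [hWin, inner_self_eq_norm_sq_to_K]
    rfl
  have hWd : ∀ x y : A, w (star (x - y) * (x - y)) = ((‖πw x ζw - πw y ζw‖ : ℂ)) ^ 2 := by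
    intro x y
    rw [hWn]
    have : πw (x - y) ζw = πw x ζw - πw y ζw := by rw [map_sub]; rfl
    rw [this]
  constructor
  · intro hAC
    by_cases hall : ∀ a : A, v (star a * a) = 0
    · refine ⟨0, le_refl 0, fun a => ?_⟩
      have hw0 : ∀ b : A, w (star b * b) = 0 := by
        intro b
        have h1 : Tendsto (fun _ : ℕ => v (star b * b)) atTop (𝓝 0) := by
          simpa [hall b] using (tendsto_const_nhds :
            Tendsto (fun _ : ℕ => (0 : ℂ)) atTop (𝓝 0))
        have h2 : Tendsto (fun p : ℕ × ℕ =>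
            w (star ((fun _ : ℕ => b) p.1 - (fun _ : ℕ => b) p.2) *
              ((fun _ : ℕ => b) p.1 - (fun _ : ℕ => b) p.2))) atTop (𝓝 0) := by
          simpa using (tendsto_const_nhds : Tendsto (fun _ : ℕ × ℕ => (0 : ℂ)) atTop (𝓝 0))
        exact tendsto_nhds_unique tendsto_const_nhds (hAC (fun _ => b) h1 h2)
      rw [aux_vanish_of_vanish_on_star_mul_self w hw0 a]
      simp
    · push_neg at hall
      obtain ⟨a₀, ha₀⟩ := hall
      classical
      -- the joint cyclic vector map
      set L : A →ₗ[ℂ] WithLp 2 (Hv × Hw) :=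
        { toFun := fun a => mkE (πv a ζv) (πw a ζw)
          map_add' := by
            intro a b
            simp only [map_add, ContinuousLinearMap.add_apply]
            rfl
          map_smul' := by
            intro c a
            simp only [map_smul, ContinuousLinearMap.smul_apply, RingHom.id_apply]
            rfl } with hLdef
      have hLa : ∀ a : A, L a = mkE (πv a ζv) (πw a ζw) := fun a => rfl
      set G : Submodule ℂ (WithLp 2 (Hv × Hw)) := (LinearMap.range L).topologicalClosure
        with hGdef
      haveI : CompleteSpace G := (Submodule.isClosed_topologicalClosure _).completeSpace_coe
      have hmemL : ∀ a : A, L a ∈ G := fun a =>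
        Submodule.le_topologicalClosure _ (LinearMap.mem_range_self L a)
      have hGclosure : ∀ z, z ∈ G ↔
          z ∈ closure ((LinearMap.range L : Submodule ℂ (WithLp 2 (Hv × Hw))) :
            Set (WithLp 2 (Hv × Hw))) := fun z => Iff.rfl
      have hρL : ∀ b a : A, rhoE (πv b) (πw b) (L a) = L (b * a) := by
        intro b a
        rw [hLa, hLa, rhoE_apply, map_mul, map_mul]
        rfl
      have hGinv : ∀ (b : A), ∀ z ∈ G, rhoE (πv b) (πw b) z ∈ G := by
        intro b z hz
        rw [hGclosure] at hz ⊢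
        refine map_mem_closure (rhoE (πv b) (πw b)).continuous hz ?_
        rintro _ ⟨a, rfl⟩
        exact ⟨b * a, (hρL b a).symm⟩
      have hadjE : ∀ (b : A) (x y : WithLp 2 (Hv × Hw)),
          ⟪rhoE (πv b) (πw b) x, y⟫ = ⟪x, rhoE (πv (star b)) (πw (star b)) y⟫ := by
        intro b x y
        rw [rhoE_apply, rhoE_apply]
        nth_rw 1 [← mkE_eta y]
        nth_rw 3 [← mkE_eta x]
        rw [inner_mkE, inner_mkE, hmv, hmw]
      -- graph property
      have hgraph : ∀ z ∈ G, Efst z = 0 → Esnd z = 0 := by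
        intro z hz h1
        rw [hGclosure] at hz
        obtain ⟨u, hu, hulim⟩ := mem_closure_iff_seq_limit.mp hz
        simp only [SetLike.mem_coe, LinearMap.mem_range] at hu
        choose a ha using hu
        have hfu : (fun n => πv (a n) ζv) = fun n => Efst (u n) :=
          funext fun n => by rw [← ha n]; rfl
        have hsu : (fun n => πw (a n) ζw) = fun n => Esnd (u n) :=
          funext fun n => by rw [← ha n]; rfl
        have hVlim : Tendsto (fun n => πv (a n) ζv) atTop (𝓝 (0 : Hv)) := by
          rw [hfu, ← h1]
          exact (Efst.continuous.tendsto z).comp hulim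
        have hWlim : Tendsto (fun n => πw (a n) ζw) atTop (𝓝 (Esnd z)) := by
          rw [hsu]
          exact (Esnd.continuous.tendsto z).comp hulim
        have sqcont : Continuous fun r : ℝ => ((r : ℂ)) ^ 2 :=
          (Complex.continuous_ofReal).pow 2
        have hv0 : Tendsto (fun n => v (star (a n) * a n)) atTop (𝓝 0) := by
          simp only [hVn]
          have hn : Tendsto (fun n => ‖πv (a n) ζv‖) atTop (𝓝 0) := by
            simpa using hVlim.norm
          simpa [Function.comp_def] using (sqcont.tendsto 0).comp hn
        have hcau : Tendsto (fun p : ℕ × ℕ =>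
            w (star (a p.1 - a p.2) * (a p.1 - a p.2))) atTop (𝓝 0) := by
          have hcs : CauchySeq (fun n => πw (a n) ζw) := hWlim.cauchySeq
          rw [cauchySeq_iff_tendsto_dist_atTop_0] at hcs
          have := (sqcont.tendsto 0).comp hcs
          simp only [Function.comp_def, dist_eq_norm] at this
          simp only [hWd]
          simpa using this
        have hlim0 := hAC a hv0 hcau
        have hlim1 : Tendsto (fun n => w (star (a n) * a n)) atTop
            (𝓝 (((‖Esnd z‖ : ℂ)) ^ 2)) := by
          simp only [hWn]
          exact (sqcont.tendsto _).comp hWlim.norm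
        have hz2 := tendsto_nhds_unique hlim1 hlim0
        simpa using hz2
      -- the projection onto G
      set P : WithLp 2 (Hv × Hw) →L[ℂ] WithLp 2 (Hv × Hw) :=
        G.subtypeL.comp (Submodule.orthogonalProjectionOnto G) with hPdef
      have hPmem : ∀ x, P x ∈ G := fun x => (Submodule.orthogonalProjectionOnto G x).2
      have hPid : ∀ x ∈ G, P x = x := fun x hx => Submodule.starProjection_eq_self_iff.mpr hx
      have hPcomm : ∀ (b : A) (x : WithLp 2 (Hv × Hw)),
          P (rhoE (πv b) (πw b) x) = rhoE (πv b) (πw b) (P x) := fun b x =>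
        aux_orthProj_comm G (rhoE (πv b) (πw b)) (rhoE (πv (star b)) (πw (star b)))
          (hadjE b) (hGinv b) (hGinv (star b)) x
      have hPsym : ∀ x y, ⟪P x, y⟫ = ⟪x, P y⟫ := fun x y =>
        (Submodule.starProjection_isSymmetric G) x y
      -- block components of P
      set S₁ : Hv →L[ℂ] Hv := (Efst.comp P).comp inlE with hS₁def
      set Q : Hv →L[ℂ] Hw := (Esnd.comp P).comp inlE with hQdef
      have hinl : ∀ ξ : Hv, inlE (Hw := Hw) ξ = mkE ξ 0 := fun ξ => rfl
      have hinlρ : ∀ (b : A) (ξ : Hv),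
          inlE (πv b ξ) = rhoE (πv b) (πw b) (inlE ξ) := by
        intro b ξ
        rw [hinl, hinl, rhoE_apply]
        have e1 : Efst (mkE ξ (0 : Hw)) = ξ := rfl
        have e2 : Esnd (mkE ξ (0 : Hw)) = (0 : Hw) := rfl
        rw [e1, e2, map_zero]
      have hS₁app : ∀ ξ : Hv, S₁ ξ = Efst (P (inlE ξ)) := fun ξ => rfl
      have hQapp : ∀ ξ : Hv, Q ξ = Esnd (P (inlE ξ)) := fun ξ => rfl
      have hS₁comm : ∀ (b : A) (ξ : Hv), S₁ (πv b ξ) = πv b (S₁ ξ) := by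
        intro b ξ
        rw [hS₁app, hS₁app, hinlρ, hPcomm, rhoE_apply]
        rfl
      have hQcomm : ∀ (b : A) (ξ : Hv), Q (πv b ξ) = πw b (Q ξ) := by
        intro b ξ
        rw [hQapp, hQapp, hinlρ, hPcomm, rhoE_apply]
        rfl
      obtain ⟨c, hc⟩ := hirr S₁ hS₁comm
      have hS₁eq : ∀ ξ : Hv, S₁ ξ = c • ξ := fun ξ => by
        rw [hc]; simp
      -- the graph relation
      have hQV : ∀ a : A, Q (πv a ζv) = c • (πw a ζw) := by
        intro a
        have hsub : P (inlE (πv a ζv)) - c • L a ∈ G :=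
          Submodule.sub_mem _ (hPmem _) (Submodule.smul_mem _ _ (hmemL a))
        have hfst : Efst (P (inlE (πv a ζv)) - c • L a) = 0 := by
          rw [map_sub, map_smul, ← hS₁app, hS₁eq]
          have : Efst (L a) = πv a ζv := rfl
          rw [this, sub_self]
        have hsnd := hgraph _ hsub hfst
        rw [map_sub, map_smul, ← hQapp] at hsnd
        have : Esnd (L a) = πw a ζw := rfl
        rw [this] at hsnd
        exact sub_eq_zero.mp hsnd
      -- c ≠ 0
      have hcne : c ≠ 0 := by
        intro hc0
        have hQ0 : (Q : Hv → Hw) = fun _ => 0 := by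
          refine hv_cyc.equalizer Q.continuous continuous_const (funext fun a => ?_)
          simp only [Function.comp_apply]
          rw [hQV, hc0, zero_smul]
        apply ha₀
        rw [hVin]
        have hPz : P (inlE (πv a₀ ζv)) = 0 := by
          nth_rw 1 [← mkE_eta (P (inlE (πv a₀ ζv)))]
          rw [← hS₁app, ← hQapp, hS₁eq, hc0, zero_smul]
          have : Q (πv a₀ ζv) = 0 := by rw [show (Q : Hv → Hw) (πv a₀ ζv) = 0 from by rw [hQ0]]
          rw [this]
          rfl
        have h1 : ⟪L a₀, inlE (πv a₀ ζv)⟫ = ⟪πv a₀ ζv, πv a₀ ζv⟫ := by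
          rw [hLa, hinl, inner_mkE, inner_zero_right, add_zero]
        have h2 : ⟪L a₀, inlE (πv a₀ ζv)⟫ = 0 := by
          rw [← hPid _ (hmemL a₀), hPsym, hPz, inner_zero_right]
        rw [← h1, h2]
      -- the intertwining operator
      set S : Hv →L[ℂ] Hw := c⁻¹ • Q with hSdef
      have hSapp : ∀ ξ : Hv, S ξ = c⁻¹ • Q ξ := fun ξ => rfl
      have hSV : ∀ a : A, S (πv a ζv) = πw a ζw := by
        intro a
        rw [hSapp, hQV, smul_smul, inv_mul_cancel₀ hcne, one_smul]
      have hScomm : ∀ (b : A) (ξ : Hv), S (πv b ξ) = πw b (S ξ) := by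
        intro b ξ
        rw [hSapp, hSapp, hQcomm, map_smul]
      set R := ContinuousLinearMap.adjoint S with hRdef
      have hRcomm : ∀ (b : A) (η : Hw), R (πw b η) = πv b (R η) := by
        intro b η
        apply ext_inner_right ℂ
        intro ξ
        rw [hRdef, ContinuousLinearMap.adjoint_inner_left, hmw, ← hScomm,
          ← ContinuousLinearMap.adjoint_inner_left S, ← hmv, ← hRdef]
      have hMcomm : ∀ (b : A) (ξ : Hv), (R.comp S) (πv b ξ) = πv b ((R.comp S) ξ) := by
        intro b ξ
        rw [ContinuousLinearMap.comp_apply, ContinuousLinearMap.comp_apply, hScomm, hRcomm]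
      obtain ⟨γ, hγ⟩ := hirr (R.comp S) hMcomm
      have hkey : ∀ a : A, w (star a * a) = γ * v (star a * a) := by
        intro a
        rw [hWin, hVin, ← hSV a, ← ContinuousLinearMap.adjoint_inner_right S]
        have : ContinuousLinearMap.adjoint S (S (πv a ζv)) = (R.comp S) (πv a ζv) := rfl
        rw [this, hγ]
        simp [inner_smul_right]
      -- identify the scalar
      set α : ℝ := ‖πw a₀ ζw‖ ^ 2 / ‖πv a₀ ζv‖ ^ 2 with hαdef
      have hVa₀ : ‖πv a₀ ζv‖ ≠ 0 := by
        intro h0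
        apply ha₀
        rw [hVn, h0]
        simp
      have hγα : (α : ℂ) = γ := by
        have h1 := hkey a₀
        rw [hWn, hVn] at h1
        rw [hαdef]
        push_cast
        rw [h1, mul_div_assoc, div_self (by
          exact pow_ne_zero 2 (by exact_mod_cast hVa₀)), mul_one]
      refine ⟨α, div_nonneg (sq_nonneg _) (sq_nonneg _), fun a => ?_⟩
      have hφ : ∀ b : A, (w - (α : ℂ) • v) (star b * b) = 0 := by
        intro b
        simp only [LinearMap.sub_apply, LinearMap.smul_apply, smul_eq_mul]
        rw [hkey b, hγα, sub_self]
      have hres := aux_vanish_of_vanish_on_star_mul_self (w - (α : ℂ) • v) hφ a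
      simp only [LinearMap.sub_apply, LinearMap.smul_apply, smul_eq_mul] at hres
      linear_combination hres
  · rintro ⟨α, hα, hs⟩
    intro a hv' _
    simp only [hs]
    simpa using hv'.const_mul ((α : ℂ))
end

section
/- Let ν be a finite measure on a measurable space (T,Σ). For every f ∈ L²(ν) and every simple function φ one has |∫_T |f|·conj(φ) dν| ≤ sup{|∫_T f·conj(ψ) dν| : ψ a simple function with |ψ| ≤ |φ| pointwise}. -/
open MeasureTheory Filter Topology

/-- For a finite measure `ν`, every `f ∈ L²(ν)` and every simple function `φ` satisfy
`|∫ |f| conj φ dν| ≤ sup { |∫ f conj ψ dν| : ψ simple, |ψ| ≤ |φ| }`. -/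

theorem integral_abs_le_sup
    {T : Type*} [MeasurableSpace T] (ν : Measure T) [IsFiniteMeasure ν]
    (f : T → ℂ) (hf : MemLp f 2 ν) (φ : SimpleFunc T ℂ) :
    ‖∫ x, (‖f x‖ : ℂ) * (starRingEnd ℂ) (φ x) ∂ν‖ ≤
      sSup {r : ℝ | ∃ ψ : SimpleFunc T ℂ,
        (∀ x, ‖ψ x‖ ≤ ‖φ x‖) ∧ r = ‖∫ x, f x * (starRingEnd ℂ) (ψ x) ∂ν‖} := by
  classical
  have hm : StronglyMeasurable (hf.1.mk f) := hf.1.stronglyMeasurable_mk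
  set f' := hf.1.mk f with hf'def
  have hae : f =ᵐ[ν] f' := hf.1.ae_eq_mk
  have hf' : MemLp f' 2 ν := hf.ae_eq hae
  have hint : Integrable f' ν := hf'.integrable one_le_two
  have hintf : Integrable f ν := hf.integrable one_le_two
  -- the sign function of f'
  set g : T → ℂ := fun x => if f' x = 0 then 1 else f' x / ‖f' x‖ with hg
  have hgm : Measurable g := by
    apply Measurable.ite (hm.measurable (measurableSet_singleton 0)) measurable_const
    exact hm.measurable.div (Complex.measurable_ofReal.comp hm.measurable.norm)
  have hmem : ∀ x, g x ∈ Metric.closedBall (0:ℂ) 1 := by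
    intro x
    simp only [Metric.mem_closedBall, dist_zero_right, hg]
    split_ifs with h
    · simp
    · rw [norm_div]; simp [div_le_one_iff, h]
  have hkey : ∀ x, f' x * (starRingEnd ℂ) (g x) = (‖f' x‖ : ℂ) := by
    intro x
    simp only [hg]
    split_ifs with h
    · simp [h]
    · have hn : (‖f' x‖ : ℂ) ≠ 0 := by
        simpa using (norm_ne_zero_iff.mpr h)
      rw [map_div₀, Complex.conj_ofReal, mul_div_assoc', div_eq_iff hn,
        Complex.mul_conj, Complex.normSq_eq_norm_sq]
      push_cast
      ring
  set gn := SimpleFunc.approxOn g hgm (Metric.closedBall (0:ℂ) 1) 0 (by simp) with hgn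
  have htend : ∀ x, Tendsto (fun n => gn n x) atTop (𝓝 (g x)) := fun x =>
    SimpleFunc.tendsto_approxOn hgm (by simp)
      (by rw [IsClosed.closure_eq Metric.isClosed_closedBall]; exact hmem x)
  have hgnle : ∀ n x, ‖gn n x‖ ≤ 1 := by
    intro n x
    have := SimpleFunc.approxOn_mem hgm (by simp : (0:ℂ) ∈ Metric.closedBall (0:ℂ) 1) n x
    simpa [Metric.mem_closedBall, dist_zero_right] using this
  set ψn : ℕ → SimpleFunc T ℂ := fun n => gn n * φ with hψn
  have hψle : ∀ n x, ‖ψn n x‖ ≤ ‖φ x‖ := by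
    intro n x
    simp only [hψn, SimpleFunc.coe_mul, Pi.mul_apply, norm_mul]
    calc ‖gn n x‖ * ‖φ x‖ ≤ 1 * ‖φ x‖ :=
          mul_le_mul_of_nonneg_right (hgnle n x) (norm_nonneg _)
      _ = ‖φ x‖ := one_mul _
  obtain ⟨C₀, hC₀⟩ : ∃ C, ∀ x, ‖φ x‖ ≤ C := SimpleFunc.exists_forall_norm_le φ
  set C := max C₀ 0 with hCdef
  have hC : ∀ x, ‖φ x‖ ≤ C := fun x => le_max_of_le_left (hC₀ x)
  -- dominated convergence
  have hdct : Tendsto (fun n => ∫ x, f' x * (starRingEnd ℂ) (ψn n x) ∂ν) atTop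
      (𝓝 (∫ x, (‖f' x‖ : ℂ) * (starRingEnd ℂ) (φ x) ∂ν)) := by
    have := tendsto_integral_of_dominated_convergence
      (μ := ν) (F := fun n x => f' x * (starRingEnd ℂ) (ψn n x))
      (f := fun x => (‖f' x‖ : ℂ) * (starRingEnd ℂ) (φ x))
      (bound := fun x => ‖f' x‖ * C)
      (fun n => hm.aestronglyMeasurable.mul
        ((Complex.continuous_conj.comp_stronglyMeasurable
          (ψn n).stronglyMeasurable).aestronglyMeasurable))
      (hint.norm.mul_const C)
      (fun n => Filter.Eventually.of_forall fun x => by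
        rw [norm_mul, RCLike.norm_conj]
        exact mul_le_mul_of_nonneg_left ((hψle n x).trans (hC x)) (norm_nonneg _))
      (Filter.Eventually.of_forall fun x => by
        have h1 : Tendsto (fun n => f' x * (starRingEnd ℂ) (ψn n x)) atTop
            (𝓝 (f' x * (starRingEnd ℂ) (g x * φ x)))  := by
          apply Tendsto.const_mul
          exact (Complex.continuous_conj.tendsto _).comp ((htend x).mul_const (φ x))
        have h2 : f' x * (starRingEnd ℂ) (g x * φ x)
            = (‖f' x‖ : ℂ) * (starRingEnd ℂ) (φ x) := by
          rw [map_mul, ← mul_assoc, hkey x]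
        rwa [h2] at h1)
    exact this
  -- rewrite integrals with f instead of f'
  have heq1 : ∫ x, (‖f x‖ : ℂ) * (starRingEnd ℂ) (φ x) ∂ν
      = ∫ x, (‖f' x‖ : ℂ) * (starRingEnd ℂ) (φ x) ∂ν := by
    apply integral_congr_ae
    filter_upwards [hae] with x hx
    rw [hx]
  have heq2 : ∀ ψ : SimpleFunc T ℂ, ∫ x, f x * (starRingEnd ℂ) (ψ x) ∂ν
      = ∫ x, f' x * (starRingEnd ℂ) (ψ x) ∂ν := by
    intro ψ
    apply integral_congr_ae
    filter_upwards [hae] with x hx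
    rw [hx]
  -- the set is bounded above
  have hbdd : BddAbove {r : ℝ | ∃ ψ : SimpleFunc T ℂ,
      (∀ x, ‖ψ x‖ ≤ ‖φ x‖) ∧ r = ‖∫ x, f x * (starRingEnd ℂ) (ψ x) ∂ν‖} := by
    refine ⟨∫ x, ‖f x‖ * C ∂ν, ?_⟩
    rintro r ⟨ψ, hψ, rfl⟩
    calc ‖∫ x, f x * (starRingEnd ℂ) (ψ x) ∂ν‖
        ≤ ∫ x, ‖f x * (starRingEnd ℂ) (ψ x)‖ ∂ν := norm_integral_le_integral_norm _
      _ ≤ ∫ x, ‖f x‖ * C ∂ν := by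
          apply integral_mono_of_nonneg (Filter.Eventually.of_forall fun x => norm_nonneg _)
            (hintf.norm.mul_const C)
          apply Filter.Eventually.of_forall
          intro x
          simp only [norm_mul, RCLike.norm_conj]
          exact mul_le_mul_of_nonneg_left ((hψ x).trans (hC x)) (norm_nonneg _)
  -- conclude
  rw [heq1]
  refine le_of_tendsto hdct.norm (Filter.Eventually.of_forall fun n => ?_)
  apply le_csSup hbdd
  exact ⟨ψn n, hψle n, by rw [heq2 (ψn n)]⟩
end
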